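/- arXiv:1108.0655 — 3 statements merged into one kernel-verified Lean document; each statement's English description precedes it below -/
import Mathlib

section
/- Let q be a prime and G a profinite group acted on coprimely by an elementary abelian q-group A of order q^3, and let A_1, …, A_s be the maximal subgroups of A. If H is a closed A-invariant subgroup of G, then H is the closed subgroup topologically generated by the fixed-point subgroups C_H(A_1), …, C_H(A_s); that is, H equals the closure of the abstract subgroup generated by C_H(A_1) ∪ ⋯ ∪ C_H(A_s). -/
/-- The subgroup of elements of `G` fixed by every element of the subgroup `B` of `A`. -/
def fixedSubgroupOf {A G : Type*} [Group A] [Group G] [MulDistribMulAction A G]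
    (B : Subgroup A) : Subgroup G where
  carrier := {g | ∀ b ∈ B, b • g = g}
  one_mem' := fun b _ => smul_one b
  mul_mem' := by
    intro x y hx hy b hb
    rw [smul_mul', hx b hb, hy b hb]
  inv_mem' := by
    intro x hx b hb
    rw [smul_inv', hx b hb]

open scoped Pointwise
open Finset

section Prelim

theorem pow_mod_of_pow_eq_one {M : Type*} [Monoid M] {b : M} {q : ℕ} (h : b ^ q = 1) (n : ℕ) :
    b ^ n = b ^ (n % q) := by
  conv_lhs => rw [← Nat.div_add_mod n q]
  rw [pow_add, pow_mul, h, one_pow, one_mul]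

theorem isCoatom_of_index_prime {A : Type*} [Group A] {K : Subgroup A}
    (h : K.index.Prime) : IsCoatom K := by
  constructor
  · intro htop
    rw [htop, Subgroup.index_top] at h
    exact h.one_lt.ne' rfl
  · intro L hKL
    have hrel := Subgroup.relIndex_mul_index hKL.le
    have hdvd : L.index ∣ K.index := Dvd.intro_left _ hrel
    rcases (Nat.Prime.eq_one_or_self_of_dvd h _ hdvd) with h1 | hp
    · exact Subgroup.index_eq_one.mp h1
    · exfalso
      rw [hp] at hrel
      have hne : K.index ≠ 0 := h.ne_zero
      have h1 : K.relIndex L = 1 := by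
        have hpos : 0 < K.index := Nat.pos_of_ne_zero hne
        nlinarith [Nat.one_le_iff_ne_zero.mpr (show K.relIndex L ≠ 0 by intro h0; rw [h0] at hrel; omega)]
      have hLK : L ≤ K := Subgroup.relIndex_eq_one.mp h1
      exact hKL.not_ge hLK

/-- The action of a monoid on an invariant subgroup. -/
def invSubAction {A : Type*} [Monoid A] {T : Type*} [Group T] [MulDistribMulAction A T]
    (P : Subgroup T) (hP : ∀ a : A, ∀ x ∈ P, a • x ∈ P) : MulDistribMulAction A P where
  smul a x := ⟨a • (x : T), hP a x x.2⟩
  one_smul x := Subtype.ext (one_smul A (x : T))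
  mul_smul a b x := Subtype.ext (mul_smul a b (x : T))
  smul_mul a x y := Subtype.ext (smul_mul' a (x : T) (y : T))
  smul_one a := Subtype.ext (smul_one a)

/-- The action of a monoid on the quotient by an invariant normal subgroup. -/
def invQuotAction {A : Type*} [Monoid A] {T : Type*} [Group T] [MulDistribMulAction A T]
    (N : Subgroup T) [N.Normal] (hN : ∀ a : A, ∀ x ∈ N, a • x ∈ N) :
    MulDistribMulAction A (T ⧸ N) where
  smul a := QuotientGroup.map N N (MulDistribMulAction.toMonoidHom T a)
    (fun x hx => hN a x hx)
  one_smul x := by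
    refine QuotientGroup.induction_on x fun t => ?_
    show QuotientGroup.mk _ = _
    simp [MulDistribMulAction.toMonoidHom]
  mul_smul a b x := by
    refine QuotientGroup.induction_on x fun t => ?_
    show QuotientGroup.mk _ = QuotientGroup.mk _
    simp [MulDistribMulAction.toMonoidHom, mul_smul]
  smul_mul a x y := by
    refine QuotientGroup.induction_on x fun t => ?_
    refine QuotientGroup.induction_on y fun s => ?_
    show QuotientGroup.mk _ = QuotientGroup.mk _ * QuotientGroup.mk _
    simp [MulDistribMulAction.toMonoidHom, smul_mul']
  smul_one a := by
    show QuotientGroup.mk _ = _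
    simp

theorem isPGroup_of_exp {q : ℕ} {A : Type*} [Group A] (hA_exp : ∀ a : A, a ^ q = 1) :
    IsPGroup q A :=
  fun a => ⟨1, by simpa using hA_exp a⟩

/-- q-group fixed point on a left coset: if the coset `xR` is `B`-invariant then it
contains a `B`-fixed point. -/
theorem finite_coset_fix {q : ℕ} {A : Type*} [Group A] {T : Type*} [Group T] [Finite T]
    [MulDistribMulAction A T] (hq : q.Prime) (hA_exp : ∀ a : A, a ^ q = 1)
    (hqT : ¬ q ∣ Nat.card T) (B : Subgroup A) (R : Subgroup T)
    (hR : ∀ b ∈ B, ∀ x ∈ R, b • x ∈ R) (x : T) (hx : ∀ b ∈ B, x⁻¹ * (b • x) ∈ R) :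
    ∃ y : T, (∀ b ∈ B, b • y = y) ∧ x⁻¹ * y ∈ R := by
  classical
  let X := {y : T // x⁻¹ * y ∈ R}
  have key : ∀ (b : A), b ∈ B → ∀ y : X, x⁻¹ * (b • (y : T)) ∈ R := by
    intro b hb y
    have h1 : x⁻¹ * (b • (y : T)) = (x⁻¹ * (b • x)) * (b • (x⁻¹ * (y : T))) := by
      rw [smul_mul', smul_inv']; group
    rw [h1]
    exact R.mul_mem (hx b hb) (hR b hb _ y.2)
  letI : MulAction B X :=
    { smul := fun b y => ⟨(b : A) • (y : T), key b b.2 y⟩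
      one_smul := fun y => Subtype.ext (one_smul A (y : T))
      mul_smul := fun a b y => Subtype.ext (mul_smul (a : A) (b : A) (y : T)) }
  have hcard : Nat.card X = Nat.card R := by
    refine Nat.card_congr ⟨fun y => ⟨x⁻¹ * (y : T), y.2⟩, fun r => ⟨x * (r : T), by simp⟩,
      fun y => by simp, fun r => by simp⟩
  have hBp : IsPGroup q B := (isPGroup_of_exp hA_exp).to_subgroup B
  have hqX : ¬ q ∣ Nat.card X := by
    rw [hcard]
    intro hdvd
    exact hqT (hdvd.trans (Subgroup.card_subgroup_dvd_card R))
  haveI : Fact q.Prime := ⟨hq⟩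
  obtain ⟨y, hy⟩ := hBp.nonempty_fixed_point_of_prime_not_dvd_card X hqX
  exact ⟨(y : T), fun b hb => congrArg Subtype.val (hy ⟨b, hb⟩), y.2⟩

theorem smul_normProd {A T : Type*} [Monoid A] [CommGroup T] [MulDistribMulAction A T]
    {q : ℕ} (b : A) (hb : b ^ q = 1) (t : T) :
    b • (∏ i ∈ range q, b ^ i • t) = ∏ i ∈ range q, b ^ i • t := by
  rw [Finset.smul_prod']
  have h1 : ∀ i, b • (b ^ i • t) = b ^ (i + 1) • t := by
    intro i; rw [smul_smul, ← pow_succ']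
  simp only [h1]
  have e1 := Finset.prod_range_succ' (fun i => b ^ i • t) q
  have e2 := Finset.prod_range_succ (fun i => b ^ i • t) q
  simp only [pow_zero, one_smul, hb] at e1 e2
  exact mul_right_cancel (e1.symm.trans e2)

theorem key_computation {A T : Type*} [CommMonoid A] [CommGroup T] [MulDistribMulAction A T]
    {q : ℕ} (hq : q.Prime) (a a' : A) (ha' : a' ^ q = 1)
    (hPa : ∀ j < q, ∀ t : T, (∏ i ∈ range q, ((a * a' ^ j) ^ i) • t) = 1)
    (hPa' : ∀ t : T, (∏ i ∈ range q, (a' ^ i) • t) = 1)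
    (t : T) : t ^ q = 1 := by
  haveI : Fact q.Prime := ⟨hq⟩
  haveI : NeZero q := ⟨hq.ne_zero⟩
  have hq0 : 0 < q := hq.pos
  have row_eq_one : ∀ i : ℕ, (∏ j ∈ range q, (a ^ i * a' ^ j) • t) = 1 := by
    intro i
    have h : ∀ j, (a ^ i * a' ^ j) • t = a ^ i • (a' ^ j • t) := fun j => mul_smul _ _ _
    simp only [h]
    rw [← Finset.smul_prod', hPa' t, smul_one]
  have row_reindex : ∀ i ∈ Ico 1 q, (∏ j ∈ range q, (a ^ i * a' ^ (j * i)) • t)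
      = ∏ j ∈ range q, (a ^ i * a' ^ j) • t := by
    intro i hi
    rw [mem_Ico] at hi
    have hiq : ¬ q ∣ i := fun hdvd => absurd (Nat.le_of_dvd (by omega) hdvd) (by omega)
    have hu : (i : ZMod q) ≠ 0 := fun h => hiq ((ZMod.natCast_eq_zero_iff i q).mp h)
    refine Finset.prod_nbij' (fun j => j * i % q)
      (fun m => ((m : ZMod q) * (i : ZMod q)⁻¹).val) ?_ ?_ ?_ ?_ ?_
    · intro j _; exact mem_range.mpr (Nat.mod_lt _ hq0)
    · intro m _; exact mem_range.mpr (ZMod.val_lt _)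
    · intro j hj
      rw [mem_range] at hj
      show (((j * i % q : ℕ) : ZMod q) * (i : ZMod q)⁻¹).val = j
      have : ((j * i % q : ℕ) : ZMod q) = (j : ZMod q) * (i : ZMod q) := by
        rw [ZMod.natCast_mod]; push_cast; ring
      rw [this, mul_assoc, mul_inv_cancel₀ hu, mul_one, ZMod.val_natCast,
        Nat.mod_eq_of_lt hj]
    · intro m hm
      rw [mem_range] at hm
      show ((m : ZMod q) * (i : ZMod q)⁻¹).val * i % q = m
      have : ((((m : ZMod q) * (i : ZMod q)⁻¹).val * i : ℕ) : ZMod q) = (m : ZMod q) := by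
        push_cast [ZMod.natCast_val, ZMod.cast_id]
        rw [mul_assoc, inv_mul_cancel₀ hu, mul_one]
      rw [← ZMod.val_natCast, this, ZMod.val_natCast, Nat.mod_eq_of_lt hm]
    · intro j _
      congr 1
      rw [pow_mod_of_pow_eq_one ha' (j * i)]
  have main : (1 : T) = t ^ q := by
    calc (1 : T) = ∏ j ∈ range q, (∏ i ∈ range q, ((a * a' ^ j) ^ i) • t) :=
          (Finset.prod_eq_one (fun j hj => hPa j (mem_range.mp hj) t)).symm
    _ = ∏ j ∈ range q, ∏ i ∈ range q, (a ^ i * a' ^ (j * i)) • t := by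
        refine Finset.prod_congr rfl fun j _ => Finset.prod_congr rfl fun i _ => ?_
        rw [mul_pow, ← pow_mul]
    _ = ∏ i ∈ range q, ∏ j ∈ range q, (a ^ i * a' ^ (j * i)) • t := Finset.prod_comm
    _ = (∏ j ∈ range q, (a ^ 0 * a' ^ (j * 0)) • t) *
          ∏ i ∈ Ico 1 q, ∏ j ∈ range q, (a ^ i * a' ^ (j * i)) • t := by
        rw [range_eq_Ico, Finset.prod_eq_prod_Ico_succ_bot hq0]
    _ = t ^ q * 1 := by
        congr 1
        · simp [prod_const, card_range]
        · exact Finset.prod_eq_one fun i hi => (row_reindex i hi).trans (row_eq_one i)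
    _ = t ^ q := mul_one _
  exact main.symm

end Prelim

section AbelianCase
variable {q : ℕ} {A : Type*} [CommGroup A]

theorem abelian_case (hq : q.Prime)
    (hA_card : Nat.card A = q ^ 3) (hA_exp : ∀ a : A, a ^ q = 1)
    {T : Type*} [Group T] [Finite T] [MulDistribMulAction A T]
    (hqT : ¬ q ∣ Nat.card T)
    (hcomm : ∀ x y : T, x * y = y * x)
    (hirr : ∀ P : Subgroup T, (∀ a : A, ∀ x ∈ P, a • x ∈ P) → P = ⊥ ∨ P = ⊤) :
    ∃ B : Subgroup A, IsCoatom B ∧ fixedSubgroupOf (G := T) B = ⊤ := by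
  haveI : Fact q.Prime := ⟨hq⟩
  have hq1 : 1 < q := hq.one_lt
  haveI : Finite A := Nat.finite_of_card_ne_zero (by rw [hA_card]; positivity)
  haveI : Nontrivial A := by
    rw [← Finite.one_lt_card_iff_nontrivial, hA_card]
    calc 1 < q := hq1
    _ ≤ q ^ 3 := Nat.le_self_pow (by norm_num) q
  -- the kernel of the action
  set K : Subgroup A :=
    { carrier := {a : A | ∀ t : T, a • t = t}
      one_mem' := fun t => one_smul _ t
      mul_mem' := by intro a b ha hb t; rw [mul_smul, hb t, ha t]
      inv_mem' := by intro a ha t; conv_lhs => rw [← ha t, inv_smul_smul] } with hK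
  have hmemK : ∀ a : A, a ∈ K ↔ ∀ t : T, a • t = t := fun a => Iff.rfl
  have hfixK : ∀ B : Subgroup A, B ≤ K → fixedSubgroupOf (G := T) B = ⊤ := by
    intro B hBK
    rw [Subgroup.eq_top_iff']
    intro t b hb
    exact (hBK hb) t
  by_cases hKtop : K = ⊤
  · haveI : Finite (Subgroup A) := Finite.of_injective _ (SetLike.coe_injective (A := Subgroup A))
    haveI : Nontrivial (Subgroup A) := ⟨⊥, ⊤, fun h => by
      have : ∀ x : A, x ∈ (⊥ : Subgroup A) := fun x => h ▸ Subgroup.mem_top x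
      obtain ⟨x, y, hxy⟩ := exists_pair_ne A
      have hx := Subgroup.mem_bot.mp (this x)
      have hy := Subgroup.mem_bot.mp (this y)
      exact hxy (hx.trans hy.symm)⟩
    obtain ⟨B, hB⟩ := IsCoatomic.exists_coatom (α := Subgroup A)
    exact ⟨B, hB, hfixK B (hKtop ▸ le_top)⟩
  · letI : CommGroup T := { (inferInstance : Group T) with mul_comm := hcomm }
    -- norm products attached to non-kernel elements vanish
    have hPzero : ∀ b : A, b ∉ K → ∀ t : T, (∏ i ∈ range q, b ^ i • t) = 1 := by
      intro b hb t
      set Cb : Subgroup T :=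
        { carrier := {t : T | b • t = t}
          one_mem' := smul_one b
          mul_mem' := by intro x y hx hy; show b • (x * y) = x * y; rw [smul_mul', hx, hy]
          inv_mem' := by intro x hx; show b • x⁻¹ = x⁻¹; rw [smul_inv', hx] } with hCb
      have hCbinv : ∀ a : A, ∀ x ∈ Cb, a • x ∈ Cb := by
        intro a x hx
        show b • (a • x) = a • x
        rw [smul_smul, mul_comm b a, ← smul_smul, hx]
      rcases hirr Cb hCbinv with hbot | htop
      · have hmem : (∏ i ∈ range q, b ^ i • t) ∈ Cb := smul_normProd b (hA_exp b) t
        rw [hbot] at hmem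
        exact hmem
      · exact absurd (fun t => by
          have : t ∈ Cb := htop ▸ Subgroup.mem_top t
          exact this) hb
    -- index analysis
    have hidx_dvd : K.index ∣ q ^ 3 := hA_card ▸ Dvd.intro_left _ K.card_mul_index
    obtain ⟨k, hk3, hkeq⟩ := (Nat.dvd_prime_pow hq).mp hidx_dvd
    have hk0 : k ≠ 0 := by
      intro h0
      rw [h0, pow_zero] at hkeq
      exact hKtop (Subgroup.index_eq_one.mp hkeq)
    by_cases hk1 : k = 1
    · refine ⟨K, isCoatom_of_index_prime ?_, hfixK K le_rfl⟩
      rw [hkeq, hk1, pow_one]; exact hq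
    · -- k ≥ 2 : derive a contradiction
      exfalso
      have hk2 : 2 ≤ k := by omega
      have hq2idx : q ^ 2 ≤ K.index := by
        rw [hkeq]; exact Nat.pow_le_pow_right hq.pos hk2
      have hcardQ : Nat.card (A ⧸ K) = K.index := K.index_eq_card.symm
      haveI : Nontrivial (A ⧸ K) := by
        rw [← Finite.one_lt_card_iff_nontrivial, hcardQ]
        have := hq.one_lt
        nlinarith [hq2idx, hq.pos]
      obtain ⟨xb, hxb⟩ := exists_ne (1 : A ⧸ K)
      obtain ⟨a, rfl⟩ := QuotientGroup.mk_surjective xb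
      have haK : a ∉ K := fun h => hxb ((QuotientGroup.eq_one_iff a).mpr h)
      have hmkq : ∀ c : A, (QuotientGroup.mk c : A ⧸ K) ^ q = 1 := by
        intro c
        rw [← QuotientGroup.mk_pow, hA_exp c, QuotientGroup.mk_one]
      have hzle : Nat.card (Subgroup.zpowers ((QuotientGroup.mk a : A ⧸ K))) ≤ q := by
        rw [Nat.card_zpowers]
        exact Nat.le_of_dvd hq.pos (orderOf_dvd_of_pow_eq_one (hmkq a))
      have hzne : Subgroup.zpowers ((QuotientGroup.mk a : A ⧸ K)) ≠ ⊤ := by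
        intro h
        have := Subgroup.card_top (G := A ⧸ K)
        rw [← h] at this
        rw [this, hcardQ] at hzle
        nlinarith [hq.one_lt]
      obtain ⟨yb, hyb⟩ : ∃ y : A ⧸ K, y ∉ Subgroup.zpowers ((QuotientGroup.mk a : A ⧸ K)) := by
        by_contra hcon
        push_neg at hcon
        exact hzne ((Subgroup.eq_top_iff' _).mpr hcon)
      obtain ⟨a', rfl⟩ := QuotientGroup.mk_surjective yb
      have ha'K : a' ∉ K := fun h => hyb (by
        rw [(QuotientGroup.eq_one_iff a').mpr h]
        exact Subgroup.one_mem _)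
      have hnotK : ∀ j, j < q → a * a' ^ j ∉ K := by
        intro j hj hmem
        have hquo : (QuotientGroup.mk a : A ⧸ K) * (QuotientGroup.mk a' : A ⧸ K) ^ j = 1 := by
          rw [← QuotientGroup.mk_pow, ← QuotientGroup.mk_mul]
          exact (QuotientGroup.eq_one_iff _).mpr hmem
        rcases Nat.eq_zero_or_pos j with hj0 | hjpos
        · rw [hj0, pow_zero, mul_one] at hquo
          exact hxb hquo
        · -- mk a' ∈ zpowers (mk a)
          apply hyb
          have hjq : ¬ q ∣ j := fun hdvd => absurd (Nat.le_of_dvd hjpos hdvd) (by omega)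
          have hju : (j : ZMod q) ≠ 0 := fun h => hjq ((ZMod.natCast_eq_zero_iff j q).mp h)
          set m := ((j : ZMod q)⁻¹).val with hm
          have hjm : j * m % q = 1 := by
            have : ((j * m : ℕ) : ZMod q) = 1 := by
              push_cast [hm, ZMod.natCast_val, ZMod.cast_id]
              rw [mul_inv_cancel₀ hju]
            rw [← ZMod.val_natCast, this, ZMod.val_one]
          have h1 : (QuotientGroup.mk a' : A ⧸ K) = ((QuotientGroup.mk a' : A ⧸ K) ^ j) ^ m := by
            rw [← pow_mul, pow_mod_of_pow_eq_one (hmkq a') (j * m), hjm, pow_one]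
          rw [h1]
          have h2 : (QuotientGroup.mk a' : A ⧸ K) ^ j = (QuotientGroup.mk a : A ⧸ K)⁻¹ :=
            (inv_eq_of_mul_eq_one_right hquo).symm
          rw [h2]
          exact Subgroup.pow_mem _ (Subgroup.inv_mem _ (Subgroup.mem_zpowers _)) m
      have hTq : ∀ t : T, t ^ q = 1 := by
        intro t
        refine key_computation hq a a' (hA_exp a') ?_ ?_ t
        · intro j hj t'
          exact hPzero (a * a' ^ j) (hnotK j hj) t'
        · intro t'
          exact hPzero a' ha'K t'
      -- contradiction
      rcases subsingleton_or_nontrivial T with hsub | hnt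
      · exact haK (fun t => Subsingleton.elim _ _)
      · obtain ⟨t, ht⟩ := exists_ne (1 : T)
        have h1 : orderOf t ∣ q := orderOf_dvd_of_pow_eq_one (hTq t)
        rcases (Nat.Prime.eq_one_or_self_of_dvd hq _ h1) with h2 | h2
        · exact ht (orderOf_eq_one_iff.mp h2)
        · exact hqT (h2 ▸ orderOf_dvd_natCard t)

end AbelianCase

section FiniteMain
variable {q : ℕ} {A : Type*} [CommGroup A]

theorem map_fixed_le {T : Type*} [Group T] [MulDistribMulAction A T]
    (P : Subgroup T) (hP : ∀ a : A, ∀ x ∈ P, a • x ∈ P) (x : T) (hx : x ∈ P)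
    (hmem : (letI := invSubAction P hP;
      (⟨x, hx⟩ : P) ∈ ⨆ (B : Subgroup A) (_ : IsCoatom B), fixedSubgroupOf (G := P) B)) :
    x ∈ ⨆ (B : Subgroup A) (_ : IsCoatom B), fixedSubgroupOf (G := T) B := by
  letI := invSubAction P hP
  have h1 : (⨆ (B : Subgroup A) (_ : IsCoatom B), fixedSubgroupOf (G := P) B).map P.subtype ≤
      ⨆ (B : Subgroup A) (_ : IsCoatom B), fixedSubgroupOf (G := T) B := by
    rw [Subgroup.map_iSup]
    refine iSup_mono fun B => ?_
    rw [Subgroup.map_iSup]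
    refine iSup_mono fun hB => ?_
    rintro y ⟨z, hz, rfl⟩
    intro b hb
    have := hz b hb
    exact congrArg Subtype.val this
  exact h1 ⟨⟨x, hx⟩, hmem, rfl⟩

theorem finite_main (hq : q.Prime)
    (hA_card : Nat.card A = q ^ 3) (hA_exp : ∀ a : A, a ^ q = 1) (n : ℕ) :
    ∀ (T : Type*) (_ : Group T) (_ : Finite T)
      (_ : MulDistribMulAction A T), Nat.card T = n → ¬ q ∣ Nat.card T →
      (⊤ : Subgroup T) = ⨆ (B : Subgroup A) (_ : IsCoatom B), fixedSubgroupOf (G := T) B := by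
  induction n using Nat.strong_induction_on with
  | _ n IH =>
  intro T instT instF instAct hcard hqT
  refine (eq_top_iff.mpr ?_).symm
  set R := ⨆ (B : Subgroup A) (_ : IsCoatom B), fixedSubgroupOf (G := T) B with hR
  have hcardT_pos : 0 < Nat.card T := Nat.card_pos
  by_cases hNex : ∃ N : Subgroup T, N.Normal ∧ (∀ a : A, ∀ x ∈ N, a • x ∈ N) ∧ N ≠ ⊥ ∧ N ≠ ⊤
  · obtain ⟨N, hNnormal, hNinv, hNbot, hNtop⟩ := hNex
    haveI := hNnormal
    letI instN : MulDistribMulAction A N := invSubAction N hNinv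
    letI instQ : MulDistribMulAction A (T ⧸ N) := invQuotAction N hNinv
    have hmk : ∀ (a : A) (x : T), a • (QuotientGroup.mk x : T ⧸ N) = QuotientGroup.mk (a • x) :=
      fun a x => rfl
    have hcardN_dvd : Nat.card N ∣ Nat.card T := Subgroup.card_subgroup_dvd_card N
    have hNlt : Nat.card N < n := by
      rcases lt_or_eq_of_le (Nat.le_of_dvd hcardT_pos hcardN_dvd) with h | h
      · omega
      · exact absurd (Subgroup.eq_top_of_card_eq N h) hNtop
    have hcardN_ne_one : Nat.card N ≠ 1 := by
      intro h
      exact hNbot (Subgroup.eq_bot_of_card_eq N h)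
    have hcardQ_eq : Nat.card (T ⧸ N) = N.index := N.index_eq_card.symm
    have hprod : Nat.card N * Nat.card (T ⧸ N) = Nat.card T := by
      rw [hcardQ_eq]; exact N.card_mul_index
    have hQdvd : Nat.card (T ⧸ N) ∣ Nat.card T := Dvd.intro_left _ hprod
    have hQlt : Nat.card (T ⧸ N) < n := by
      have h1 : 1 < Nat.card N := by
        have := Nat.card_pos (α := N); omega
      nlinarith [hprod, hcard ▸ hcardT_pos]
    have hqN : ¬ q ∣ Nat.card N := fun h => hqT (h.trans hcardN_dvd)
    have hqQ : ¬ q ∣ Nat.card (T ⧸ N) := fun h => hqT (h.trans hQdvd)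
    haveI instQF : Finite (T ⧸ N) := Quotient.finite _
    have hQfix := IH (Nat.card (T ⧸ N)) (by omega) (T ⧸ N) _ instQF instQ rfl hqQ
    have hNfix := IH (Nat.card N) (by omega) N _ Subtype.finite instN rfl hqN
    -- lifting subgroup
    set D : Subgroup (T ⧸ N) :=
      { carrier := {z | ∃ y ∈ R, QuotientGroup.mk y = z}
        one_mem' := ⟨1, R.one_mem, rfl⟩
        mul_mem' := by
          rintro z w ⟨y, hy, rfl⟩ ⟨y', hy', rfl⟩
          exact ⟨y * y', R.mul_mem hy hy', rfl⟩
        inv_mem' := by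
          rintro z ⟨y, hy, rfl⟩
          exact ⟨y⁻¹, R.inv_mem hy, rfl⟩ } with hD
    have hDs : (⨆ (B : Subgroup A) (_ : IsCoatom B), fixedSubgroupOf (G := T ⧸ N) B) ≤ D := by
      refine iSup_le fun B => iSup_le fun hB => ?_
      intro z hz
      obtain ⟨x, rfl⟩ := QuotientGroup.mk_surjective z
      have hx : ∀ b ∈ B, x⁻¹ * (b • x) ∈ N := by
        intro b hb
        have h1 : (QuotientGroup.mk (x⁻¹ * (b • x)) : T ⧸ N) = 1 := by
          rw [QuotientGroup.mk_mul, ← hmk b x, hz b hb]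
          simp
        exact (QuotientGroup.eq_one_iff _).mp h1
      obtain ⟨y, hyfix, hyN⟩ := finite_coset_fix hq hA_exp hqT B N
        (fun b _ x' hx' => hNinv b x' hx') x hx
      have hymem : y ∈ R := by
        have h2 : y ∈ fixedSubgroupOf (G := T) B := fun b hb => hyfix b hb
        exact (le_iSup₂ (f := fun (B : Subgroup A) (_ : IsCoatom B) =>
          fixedSubgroupOf (G := T) B) B hB) h2
      exact ⟨y, hymem, ((QuotientGroup.eq (s := N)).mpr hyN).symm⟩
    intro t _
    have ht : (QuotientGroup.mk t : T ⧸ N) ∈ D := hDs (hQfix ▸ Subgroup.mem_top _)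
    obtain ⟨y, hyR, hyt⟩ := ht
    have hwN : y⁻¹ * t ∈ N := (QuotientGroup.eq (s := N)).mp hyt
    have hwR : y⁻¹ * t ∈ R := by
      refine map_fixed_le N hNinv _ hwN ?_
      rw [← hNfix]
      exact Subgroup.mem_top _
    have : t = y * (y⁻¹ * t) := by group
    rw [this]
    exact R.mul_mem hyR hwR
  · -- no proper nontrivial invariant normal subgroup
    push_neg at hNex
    have hdich : ∀ N : Subgroup T, N.Normal → (∀ a : A, ∀ x ∈ N, a • x ∈ N) →
        N = ⊥ ∨ N = ⊤ := by
      intro N h1 h2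
      by_contra hcon
      push_neg at hcon
      exact hcon.2 (hNex N h1 h2 hcon.1)
    rcases subsingleton_or_nontrivial T with hsub | hnt
    · intro t _
      rw [Subsingleton.elim t 1]
      exact R.one_mem
    · have hZinv : ∀ a : A, ∀ x ∈ Subgroup.center T, a • x ∈ Subgroup.center T := by
        intro a x hx
        rw [Subgroup.mem_center_iff]
        intro g
        have h1 : g = a • (a⁻¹ • g) := (smul_inv_smul a g).symm
        rw [h1, ← smul_mul', ← smul_mul',
          (Subgroup.mem_center_iff.mp hx (a⁻¹ • g)).symm]
      rcases hdich (Subgroup.center T) inferInstance hZinv with hZbot | hZtop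
      · -- center trivial : Sylow argument
        haveI : Fact q.Prime := ⟨hq⟩
        have hSyl : ∀ p : ℕ, p.Prime → p ∣ n →
            p ^ (Nat.card T).factorization p ∣ Nat.card R := by
          intro p hp hpn
          haveI : Fact p.Prime := ⟨hp⟩
          have hAq : IsPGroup q A := isPGroup_of_exp hA_exp
          have hsylcard : Nat.card (Sylow p T) ∣ Nat.card T := by
            have P0 : Sylow p T := default
            exact (Sylow.card_dvd_index P0).trans ((P0 : Subgroup T).index_dvd_card)
          have hq_ndvd : ¬ q ∣ Nat.card (Sylow p T) := fun h => hqT (h.trans hsylcard)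
          obtain ⟨P, hPfixed⟩ := hAq.nonempty_fixed_point_of_prime_not_dvd_card
            (Sylow p T) hq_ndvd
          have hPinv : ∀ a : A, ∀ x ∈ (P : Subgroup T), a • x ∈ (P : Subgroup T) := by
            intro a x hx
            have h1 : a • x ∈ a • (P : Subgroup T) :=
              Subgroup.smul_mem_pointwise_smul x a (P : Subgroup T) hx
            have h2 : a • (P : Subgroup T) = ((a • P : Sylow p T) : Subgroup T) :=
              (Sylow.pointwise_smul_def).symm
            rw [h2, hPfixed a] at h1
            exact h1
          letI instP : MulDistribMulAction A (P : Subgroup T) :=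
            invSubAction (P : Subgroup T) hPinv
          have hPne : (P : Subgroup T) ≠ ⊤ := by
            intro htop
            have hTp : IsPGroup p T := by
              have h3 := P.2
              rw [htop] at h3
              exact h3.of_equiv Subgroup.topEquiv
            have h4 := hTp.bot_lt_center
            rw [hZbot] at h4
            exact lt_irrefl _ h4
          have hPdvd : Nat.card (P : Subgroup T) ∣ Nat.card T :=
            Subgroup.card_subgroup_dvd_card _
          have hPlt : Nat.card (P : Subgroup T) < n := by
            rcases lt_or_eq_of_le (Nat.le_of_dvd hcardT_pos hPdvd) with h | h
            · omega
            · exact absurd (Subgroup.eq_top_of_card_eq _ h) hPne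
          have hqP : ¬ q ∣ Nat.card (P : Subgroup T) := fun h => hqT (h.trans hPdvd)
          have hPfix := IH (Nat.card (P : Subgroup T)) (by omega) (P : Subgroup T) _
            (Subtype.finite) instP rfl hqP
          have hPle : (P : Subgroup T) ≤ R := by
            intro x hx
            exact map_fixed_le (P : Subgroup T) hPinv x hx (by rw [← hPfix]; exact Subgroup.mem_top _)
          have := Subgroup.card_dvd_of_le hPle
          rwa [P.card_eq_multiplicity] at this
        have hidx : R.index = 1 := by
          by_contra hne
          have hidx_dvd : R.index ∣ Nat.card T := dvd_of_mul_left_eq _ R.card_mul_index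
          have hidx_ne : R.index ≠ 0 := by
            intro h0
            rw [h0] at hidx_dvd
            omega
          set p := (R.index).minFac with hp
          have hpprime : p.Prime := Nat.minFac_prime hne
          have hpdvd : p ∣ R.index := Nat.minFac_dvd _
          have hpn : p ∣ n := hcard ▸ hpdvd.trans hidx_dvd
          have h5 := hSyl p hpprime hpn
          have h6 : p ^ ((Nat.card T).factorization p + 1) ∣ Nat.card T := by
            have h7 := mul_dvd_mul h5 hpdvd
            rw [R.card_mul_index] at h7
            rw [pow_succ]
            exact h7
          exact Nat.pow_succ_factorization_not_dvd (by omega) hpprime h6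
        rw [Subgroup.index_eq_one.mp hidx]
      · -- abelian case
        have hcomm : ∀ x y : T, x * y = y * x := by
          intro x y
          have hy : y ∈ Subgroup.center T := by rw [hZtop]; trivial
          exact Subgroup.mem_center_iff.mp hy x
        have hirr : ∀ P : Subgroup T, (∀ a : A, ∀ x ∈ P, a • x ∈ P) → P = ⊥ ∨ P = ⊤ := by
          intro P hPinv
          refine hdich P ?_ hPinv
          constructor
          intro m hm g
          have : g * m * g⁻¹ = m := by
            rw [hcomm g m, mul_assoc, mul_inv_cancel, mul_one]
          rw [this]
          exact hm
        obtain ⟨B, hB, hfix⟩ := abelian_case hq hA_card hA_exp hqT hcomm hirr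
        calc (⊤ : Subgroup T) = fixedSubgroupOf (G := T) B := hfix.symm
        _ ≤ R := le_iSup₂ (f := fun (B : Subgroup A) (_ : IsCoatom B) =>
            fixedSubgroupOf (G := T) B) B hB

end FiniteMain

section Profinite

variable {q : ℕ} {A : Type*} [CommGroup A] {G : Type*} [Group G]
  [TopologicalSpace G] [IsTopologicalGroup G] [CompactSpace G] [T2Space G]
  [TotallyDisconnectedSpace G] [MulDistribMulAction A G]

theorem not_dvd_of_coprime (hq : q.Prime) {m : ℕ} (h : Nat.Coprime m (q ^ 3)) : ¬ q ∣ m := by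
  intro hd
  have h1 : q ∣ Nat.gcd m (q ^ 3) := Nat.dvd_gcd hd (dvd_pow_self q three_ne_zero)
  rw [Nat.Coprime] at h
  rw [h] at h1
  exact hq.one_lt.ne' (Nat.eq_one_of_dvd_one h1 ▸ rfl)

set_option linter.unusedSectionVars false in
/-- Shrinking an open normal subgroup to an `A`-invariant one. -/
theorem acore [Finite A] (hcont : ∀ a : A, Continuous fun g : G => a • g)
    (N : Subgroup G) (hNn : N.Normal) (hNopen : IsOpen (N : Set G)) :
    ∃ M : Subgroup G, M.Normal ∧ IsOpen (M : Set G) ∧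
      (∀ a : A, ∀ x ∈ M, a • x ∈ M) ∧ M ≤ N := by
  classical
  refine ⟨⨅ a : A, a • N, ?_, ?_, ?_, ?_⟩
  · constructor
    intro x hx g
    rw [Subgroup.mem_iInf] at hx ⊢
    intro a
    have hxa := hx a
    rw [Subgroup.mem_pointwise_smul_iff_inv_smul_mem] at hxa ⊢
    have h1 : a⁻¹ • (g * x * g⁻¹) = (a⁻¹ • g) * (a⁻¹ • x) * (a⁻¹ • g)⁻¹ := by
      rw [smul_mul', smul_mul', smul_inv']
    rw [h1]
    exact hNn.conj_mem _ hxa _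
  · have hcoe : ((⨅ a : A, a • N : Subgroup G) : Set G) = ⋂ a : A, ((a • N : Subgroup G) : Set G) :=
      Subgroup.coe_iInf
    rw [hcoe]
    refine isOpen_iInter_of_finite fun a => ?_
    have h2 : ((a • N : Subgroup G) : Set G) = (fun g : G => a⁻¹ • g) ⁻¹' (N : Set G) := by
      ext x
      simp only [Set.mem_preimage, SetLike.mem_coe]
      exact Subgroup.mem_pointwise_smul_iff_inv_smul_mem
    rw [h2]
    exact (hNopen).preimage (hcont a⁻¹)
  · intro a x hx
    rw [Subgroup.mem_iInf] at hx ⊢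
    intro b
    rw [Subgroup.mem_pointwise_smul_iff_inv_smul_mem, smul_smul]
    have := hx (a⁻¹ * b)
    rw [Subgroup.mem_pointwise_smul_iff_inv_smul_mem, mul_inv_rev, inv_inv] at this
    exact this
  · have h3 := iInf_le (fun a : A => (a • N : Subgroup G)) (1 : A)
    rwa [one_smul] at h3

/-- Profinite lifting of fixed points. -/
theorem profinite_lift (hq : q.Prime)
    (hA_card : Nat.card A = q ^ 3) (hA_exp : ∀ a : A, a ^ q = 1)
    (hcont : ∀ a : A, Continuous fun g : G => a • g)
    (hcoprime : ∀ M : Subgroup G, M.Normal → IsOpen (M : Set G) →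
      Nat.Coprime M.index (Nat.card A))
    (H : Subgroup G) (hHclosed : IsClosed (H : Set G)) (hHinv : ∀ a : A, ∀ g ∈ H, a • g ∈ H)
    (B : Subgroup A) (N₀ : Subgroup G) (hN₀n : N₀.Normal) (hN₀open : IsOpen (N₀ : Set G))
    (hN₀inv : ∀ a : A, ∀ x ∈ N₀, a • x ∈ N₀)
    (h : G) (hh : h ∈ H) (hfix : ∀ b ∈ B, h⁻¹ * (b • h) ∈ N₀) :
    ∃ y ∈ H, (∀ b ∈ B, b • y = y) ∧ h⁻¹ * y ∈ N₀ := by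
  classical
  haveI : Finite A := Nat.finite_of_card_ne_zero (by
    rw [hA_card]; exact pow_ne_zero _ hq.ne_zero)
  -- the family of invariant open normal subgroups inside N₀
  let ι := {M : Subgroup G // M.Normal ∧ IsOpen (M : Set G) ∧
    (∀ a : A, ∀ x ∈ M, a • x ∈ M) ∧ M ≤ N₀}
  haveI : Nonempty ι := ⟨⟨N₀, hN₀n, hN₀open, hN₀inv, le_rfl⟩⟩
  let Tset : ι → Set G := fun M =>
    (H : Set G) ∩ ((fun y : G => h⁻¹ * y) ⁻¹' (N₀ : Set G)) ∩
      ⋂ b : B, (fun y : G => y⁻¹ * ((b : A) • y)) ⁻¹' (M.1 : Set G)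
  have hTclosed : ∀ M : ι, IsClosed (Tset M) := by
    intro M
    refine IsClosed.inter (IsClosed.inter hHclosed ?_) (isClosed_iInter fun b => ?_)
    · exact (Subgroup.isClosed_of_isOpen _ hN₀open).preimage (by continuity)
    · refine (Subgroup.isClosed_of_isOpen _ M.2.2.1).preimage ?_
      exact Continuous.mul (continuous_inv) ((hcont (b : A)).comp continuous_id)
  have hTsub : ∀ (M : ι) (y : G), y ∈ Tset M ↔
      (y ∈ H ∧ h⁻¹ * y ∈ N₀ ∧ ∀ b ∈ B, y⁻¹ * (b • y) ∈ M.1) := by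
    intro M y
    simp only [Tset, Set.mem_inter_iff, Set.mem_preimage, SetLike.mem_coe, Set.mem_iInter]
    constructor
    · rintro ⟨⟨h1, h2⟩, h3⟩
      exact ⟨h1, h2, fun b hb => h3 ⟨b, hb⟩⟩
    · rintro ⟨h1, h2, h3⟩
      exact ⟨⟨h1, h2⟩, fun b => h3 (b : A) b.2⟩
  have hTnonempty : ∀ M : ι, (Tset M).Nonempty := by
    intro M
    obtain ⟨hMn, hMopen, hMinv, hMle⟩ := M.2
    haveI := hMn
    haveI : Finite (G ⧸ M.1) := M.1.quotient_finite_of_isOpen hMopen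
    letI instQM : MulDistribMulAction A (G ⧸ M.1) := invQuotAction M.1 hMinv
    have hqQM : ¬ q ∣ Nat.card (G ⧸ M.1) := by
      have h1 : Nat.card (G ⧸ M.1) = M.1.index := M.1.index_eq_card.symm
      rw [h1]
      exact not_dvd_of_coprime hq (hA_card ▸ hcoprime M.1 hMn hMopen)
    set R' : Subgroup (G ⧸ M.1) := (H ⊓ N₀).map (QuotientGroup.mk' M.1) with hR'
    have hR'inv : ∀ b ∈ B, ∀ z ∈ R', b • z ∈ R' := by
      rintro b hb z ⟨w, hw, rfl⟩
      exact ⟨b • w, ⟨hHinv b w hw.1, hN₀inv b w hw.2⟩, rfl⟩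
    have hx : ∀ b ∈ B, ((QuotientGroup.mk' M.1) h)⁻¹ * (b • (QuotientGroup.mk' M.1) h) ∈ R' := by
      intro b hb
      refine ⟨h⁻¹ * (b • h), ⟨H.mul_mem (H.inv_mem hh) (hHinv b h hh), hfix b hb⟩, ?_⟩
      rfl
    obtain ⟨z, hzfix, hz⟩ := finite_coset_fix hq hA_exp hqQM B R' hR'inv
      ((QuotientGroup.mk' M.1) h) hx
    obtain ⟨w, hw, hwz⟩ := hz
    refine ⟨h * w, (hTsub M (h * w)).mpr ⟨H.mul_mem hh hw.1, by simpa using hw.2, ?_⟩⟩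
    intro b hb
    have h2 : (QuotientGroup.mk' M.1) ((h * w)⁻¹ * (b • (h * w))) = 1 := by
      have h3 : (QuotientGroup.mk' M.1) (h * w) = z := by
        rw [map_mul, hwz]
        group
      have h4 : (QuotientGroup.mk' M.1) (b • (h * w)) = b • z := by
        rw [← h3]; rfl
      rw [map_mul, map_inv, h3, h4, hzfix b hb]
      group
    exact (QuotientGroup.eq_one_iff _).mp h2
  have hdirected : Directed (· ⊇ ·) Tset := by
    intro M₁ M₂
    haveI := M₁.2.1
    haveI := M₂.2.1
    refine ⟨⟨M₁.1 ⊓ M₂.1, Subgroup.normal_inf_normal _ _, IsOpen.inter M₁.2.2.1 M₂.2.2.1,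
      fun a x hx => ⟨M₁.2.2.2.1 a x hx.1, M₂.2.2.2.1 a x hx.2⟩,
      le_trans inf_le_left M₁.2.2.2.2⟩, ?_, ?_⟩
    · intro y hy
      rw [hTsub] at hy ⊢
      exact ⟨hy.1, hy.2.1, fun b hb => (hy.2.2 b hb).1⟩
    · intro y hy
      rw [hTsub] at hy ⊢
      exact ⟨hy.1, hy.2.1, fun b hb => (hy.2.2 b hb).2⟩
  obtain ⟨y, hy⟩ := IsCompact.nonempty_iInter_of_directed_nonempty_isCompact_isClosed
    Tset hdirected hTnonempty (fun M => (hTclosed M).isCompact) hTclosed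
  rw [Set.mem_iInter] at hy
  have hyH : y ∈ H := ((hTsub _ y).mp (hy (Classical.arbitrary ι))).1
  have hyN₀ : h⁻¹ * y ∈ N₀ := ((hTsub _ y).mp (hy (Classical.arbitrary ι))).2.1
  refine ⟨y, hyH, ?_, hyN₀⟩
  intro b hb
  by_contra hne
  -- the element y⁻¹ * (b • y) is a nontrivial element lying in every invariant open normal M
  set g := y⁻¹ * (b • y) with hg
  have hgne : g ≠ 1 := by
    intro h1
    apply hne
    have : y * (y⁻¹ * (b • y)) = y * 1 := by rw [← hg, h1]
    group at this
    exact this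
  have hopen : IsOpen ({g}ᶜ : Set G) := isOpen_compl_singleton
  have h1mem : (1 : G) ∈ ({g}ᶜ : Set G) := fun h1 => hgne (by
    simpa using h1.symm)
  obtain ⟨V, hVclopen, hV1, hVsub⟩ := compact_exists_isClopen_in_isOpen hopen h1mem
  obtain ⟨N', hN'sub⟩ := IsTopologicalGroup.exist_openNormalSubgroup_sub_clopen_nhds_of_one hVclopen hV1
  obtain ⟨M, hMn, hMopen, hMinv, hMle⟩ := acore hcont N'.toSubgroup N'.isNormal' N'.isOpen
  haveI := hMn
  set Mi : ι := ⟨M ⊓ N₀, Subgroup.normal_inf_normal _ _, IsOpen.inter hMopen hN₀open,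
      fun a x hx => ⟨hMinv a x hx.1, hN₀inv a x hx.2⟩, inf_le_right⟩ with hMi
  have hgM : g ∈ M ⊓ N₀ := by
    have := (hTsub Mi y).mp (hy Mi)
    exact this.2.2 b hb
  have : g ∈ V := hN'sub (hMle hgM.1)
  exact hVsub this rfl

end Profinite

/-- **Lemma.** Let `q` be a prime and `G` a profinite group acted on coprimely by an
elementary abelian group `A` of order `q^3`.  If `H` is a closed `A`-invariant subgroup,
then `H` is topologically generated by the fixed-point subgroups `C_H(B)`, where `B`
ranges over the maximal subgroups of `A`. -/
theorem stmt_10 (q : ℕ) (hq : q.Prime) (A G : Type*)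
    [CommGroup A] [Group G] [TopologicalSpace G] [IsTopologicalGroup G]
    [CompactSpace G] [T2Space G] [TotallyDisconnectedSpace G]
    [MulDistribMulAction A G]
    (hA_card : Nat.card A = q ^ 3) (hA_exp : ∀ a : A, a ^ q = 1)
    (hcont : ∀ a : A, Continuous fun g : G => a • g)
    (hcoprime : ∀ M : Subgroup G, M.Normal → IsOpen (M : Set G) →
      Nat.Coprime M.index (Nat.card A))
    (H : Subgroup G) (hHclosed : IsClosed (H : Set G))
    (hHinv : ∀ a : A, ∀ g ∈ H, a • g ∈ H) :
    H = (⨆ (B : Subgroup A) (_ : IsCoatom B),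
          H ⊓ fixedSubgroupOf (G := G) B).topologicalClosure := by
  classical
  haveI : Fact q.Prime := ⟨hq⟩
  haveI : Finite A := Nat.finite_of_card_ne_zero (by
    rw [hA_card]; exact pow_ne_zero _ hq.ne_zero)
  set K := ⨆ (B : Subgroup A) (_ : IsCoatom B), H ⊓ fixedSubgroupOf (G := G) B with hKdef
  have hKle : K ≤ H := iSup_le fun B => iSup_le fun _ => inf_le_left
  refine le_antisymm ?_ (Subgroup.topologicalClosure_minimal _ hKle hHclosed)
  intro h hH
  show h ∈ closure (K : Set G)
  rw [mem_closure_iff]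
  intro U hUopen hUh
  have hWopen : IsOpen ((fun g : G => h * g) ⁻¹' U) := hUopen.preimage (by continuity)
  have hW1 : (1 : G) ∈ (fun g : G => h * g) ⁻¹' U := by simpa using hUh
  obtain ⟨V, hVclopen, hV1, hVsub⟩ := compact_exists_isClopen_in_isOpen hWopen hW1
  obtain ⟨N', hN'sub⟩ :=
    IsTopologicalGroup.exist_openNormalSubgroup_sub_clopen_nhds_of_one hVclopen hV1
  obtain ⟨N₀, hN₀n, hN₀open, hN₀inv, hN₀le⟩ :=
    acore hcont N'.toSubgroup N'.isNormal' N'.isOpen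
  haveI := hN₀n
  haveI : Finite (G ⧸ N₀) := N₀.quotient_finite_of_isOpen hN₀open
  letI instQ : MulDistribMulAction A (G ⧸ N₀) := invQuotAction N₀ hN₀inv
  set Hbar := H.map (QuotientGroup.mk' N₀) with hHbar
  have hHbarinv : ∀ a : A, ∀ z ∈ Hbar, a • z ∈ Hbar := by
    rintro a z ⟨y, hy, rfl⟩
    exact ⟨a • y, hHinv a y hy, rfl⟩
  letI instHbar : MulDistribMulAction A Hbar := invSubAction Hbar hHbarinv
  haveI : Finite ↥Hbar := Subtype.finite
  have hqHbar : ¬ q ∣ Nat.card ↥Hbar := by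
    intro hdvd
    have h1 : Nat.card ↥Hbar ∣ Nat.card (G ⧸ N₀) := Subgroup.card_subgroup_dvd_card _
    have h2 : Nat.card (G ⧸ N₀) = N₀.index := N₀.index_eq_card.symm
    exact (not_dvd_of_coprime hq (hA_card ▸ hcoprime N₀ hN₀n hN₀open)) (hdvd.trans (h2 ▸ h1))
  have hFT := finite_main hq hA_card hA_exp (Nat.card ↥Hbar) ↥Hbar _
    Subtype.finite instHbar rfl hqHbar
  set D : Subgroup ↥Hbar :=
    { carrier := {z | ∃ y ∈ K, (QuotientGroup.mk' N₀) y = (z : G ⧸ N₀)}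
      one_mem' := ⟨1, K.one_mem, by simp⟩
      mul_mem' := by
        rintro z w ⟨y, hy, hy'⟩ ⟨y', hy2, hy2'⟩
        exact ⟨y * y', K.mul_mem hy hy2, by rw [map_mul, hy', hy2']; rfl⟩
      inv_mem' := by
        rintro z ⟨y, hy, hy'⟩
        exact ⟨y⁻¹, K.inv_mem hy, by rw [map_inv, hy']; rfl⟩ } with hD
  have hDs : (⨆ (B : Subgroup A) (_ : IsCoatom B), fixedSubgroupOf (G := ↥Hbar) B) ≤ D := by
    refine iSup_le fun B => iSup_le fun hB => ?_
    intro z hz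
    obtain ⟨x, hx, hxz⟩ := z.2
    have hfix : ∀ b ∈ B, x⁻¹ * (b • x) ∈ N₀ := by
      intro b hb
      have h1 : (QuotientGroup.mk' N₀) (x⁻¹ * (b • x)) = 1 := by
        rw [map_mul, map_inv]
        have h2 : (QuotientGroup.mk' N₀) (b • x) = b • ((QuotientGroup.mk' N₀) x) := rfl
        rw [h2, hxz]

        have h3 : b • (z : G ⧸ N₀) = ((b • z : ↥Hbar) : G ⧸ N₀) := rfl
        rw [h3, hz b hb]
        group
      exact (QuotientGroup.eq_one_iff _).mp h1
    obtain ⟨y, hyH, hyfix, hyN₀⟩ := profinite_lift hq hA_card hA_exp hcont hcoprime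
      H hHclosed hHinv B N₀ hN₀n hN₀open hN₀inv x hx hfix
    refine ⟨y, ?_, ?_⟩
    · have hmem2 : y ∈ H ⊓ fixedSubgroupOf (G := G) B := ⟨hyH, fun b hb => hyfix b hb⟩
      exact (le_iSup₂ (f := fun (B : Subgroup A) (_ : IsCoatom B) =>
        H ⊓ fixedSubgroupOf (G := G) B) B hB) hmem2
    · have h5 : (QuotientGroup.mk x : G ⧸ N₀) = QuotientGroup.mk y :=
        (QuotientGroup.eq (s := N₀)).mpr hyN₀
      show (QuotientGroup.mk y : G ⧸ N₀) = (z : G ⧸ N₀)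
      rw [← h5]
      exact hxz
  have hzH : (QuotientGroup.mk' N₀) h ∈ Hbar := ⟨h, hH, rfl⟩
  have hmem : (⟨(QuotientGroup.mk' N₀) h, hzH⟩ : ↥Hbar) ∈ D := hDs (hFT ▸ Subgroup.mem_top _)
  obtain ⟨y, hyK, hymk⟩ := hmem
  have h6 : h⁻¹ * y ∈ N₀ := by
    have h7 : (QuotientGroup.mk h : G ⧸ N₀) = QuotientGroup.mk y := hymk.symm
    exact (QuotientGroup.eq (s := N₀)).mp h7
  have h8 : y ∈ U := by
    have h9 : h * (h⁻¹ * y) ∈ U := hVsub (hN'sub (hN₀le h6))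
    simpa using h9
  exact ⟨y, h8, hyK⟩
end

section
/- Let L be a Lie algebra over a field and H a subalgebra of L generated by r elements h_1, …, h_r such that every commutator in the h_i (i.e., every element of the smallest subset of L containing {h_1, …, h_r} and closed under the Lie bracket) is ad-nilpotent in L. If H is nilpotent as a Lie algebra, then there exists a positive integer v such that [L, H, H, …, H] = 0 with H repeated v times; that is, every left-normed bracket [x, k_1, k_2, …, k_v] with x ∈ L and k_1, …, k_v ∈ H vanishes. -/
/-- The smallest subset of a Lie ring containing `S` and closed under the Lie bracket:
the set of "commutators in elements of `S`". -/
inductive IsCommutatorIn {L : Type*} [LieRing L] (S : Set L) : L → Prop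
  | base {x : L} : x ∈ S → IsCommutatorIn S x
  | bracket {x y : L} : IsCommutatorIn S x → IsCommutatorIn S y →
      IsCommutatorIn S ⁅x, y⁆

/-- An element `a` of a Lie ring is ad-nilpotent if some positive iterate of
`y ↦ ⁅y, a⁆` is identically zero. -/
def IsAdNilpotentElt {L : Type*} [LieRing L] (a : L) : Prop :=
  ∃ n : ℕ, 0 < n ∧ ∀ x : L, (fun y : L => ⁅y, a⁆)^[n] x = 0

section CommW
variable {L : Type*} [LieRing L]

/-- Commutators of weight `w` in elements of `S`. -/
inductive CommW (S : Set L) : ℕ → L → Prop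
  | base {x : L} : x ∈ S → CommW S 1 x
  | bracket {a b : ℕ} {x y : L} : CommW S a x → CommW S b y → CommW S (a + b) ⁅x, y⁆

theorem commW_one_le {S : Set L} {w : ℕ} {x : L} (h : CommW S w x) : 1 ≤ w := by
  induction h with
  | base _ => exact le_refl 1
  | bracket h1 h2 ih1 ih2 => omega

theorem commW_isCommutatorIn {S : Set L} {w : ℕ} {x : L} (h : CommW S w x) :
    IsCommutatorIn S x := by
  induction h with
  | base hx => exact IsCommutatorIn.base hx
  | bracket h1 h2 ih1 ih2 => exact IsCommutatorIn.bracket ih1 ih2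

theorem commW_finite {S : Set L} (hS : S.Finite) : ∀ w : ℕ, {x | CommW S w x}.Finite := by
  intro w
  induction w using Nat.strong_induction_on with
  | _ w IH =>
    have hsub : {x | CommW S w x} ⊆
        S ∪ ⋃ a ∈ Finset.Ico 1 w, Set.image2 (fun x y : L => ⁅x, y⁆)
          {x | CommW S a x} {y | CommW S (w - a) y} := by
      intro x hx
      cases hx with
      | base hxS => exact Or.inl hxS
      | @bracket a b x y h1 h2 =>
        refine Or.inr ?_
        have ha1 := commW_one_le h1
        have hb1 := commW_one_le h2
        refine Set.mem_biUnion (Finset.mem_Ico.mpr ⟨ha1, by omega⟩) ?_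
        exact ⟨x, h1, y, by simpa using h2, rfl⟩
    refine Set.Finite.subset (hS.union ?_) hsub
    refine Set.Finite.biUnion (Finset.finite_toSet _) ?_
    intro a ha
    have ha' := Finset.mem_Ico.mp ha
    exact Set.Finite.image2 _ (IH a (by omega)) (IH (w - a) (by omega))
end CommW

section LCS
variable (R G : Type*) [CommRing R] [LieRing G] [LieAlgebra R G]

open LieModule in
theorem lcs_bracket_le : ∀ b a : ℕ,
    ⁅lowerCentralSeries R G G a, lowerCentralSeries R G G b⁆ ≤
      lowerCentralSeries R G G (a + b + 1) := by
  intro b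
  induction b with
  | zero =>
    intro a
    rw [LieSubmodule.lie_comm]
    refine le_of_eq ?_
    calc ⁅lowerCentralSeries R G G 0, lowerCentralSeries R G G a⁆
        = ⁅(⊤ : LieIdeal R G), lowerCentralSeries R G G a⁆ := by rw [lowerCentralSeries_zero]
      _ = lowerCentralSeries R G G (a + 1) := (lowerCentralSeries_succ R G G a).symm
      _ = lowerCentralSeries R G G (a + 0 + 1) := by norm_num
  | succ b IH =>
    intro a
    rw [LieSubmodule.lie_le_iff]
    intro x hx mm hmm
    rw [LieModule.lowerCentralSeries_succ] at hmm
    have hmem : mm ∈ Submodule.span R {z : G | ∃ (u : (⊤ : LieIdeal R G))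
        (n : lowerCentralSeries R G G b), ⁅(u : G), (n : G)⁆ = z} := by
      rw [← LieSubmodule.lieIdeal_oper_eq_linear_span]
      exact hmm
    have key : Submodule.span R {z : G | ∃ (u : (⊤ : LieIdeal R G))
        (n : lowerCentralSeries R G G b), ⁅(u : G), (n : G)⁆ = z} ≤
        Submodule.comap (LieAlgebra.ad R G x)
          (lowerCentralSeries R G G (a + (b + 1) + 1)).toSubmodule := by
      rw [Submodule.span_le]
      rintro _ ⟨u, n, rfl⟩
      simp only [SetLike.mem_coe, Submodule.mem_comap, LieAlgebra.ad_apply,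
        LieSubmodule.mem_toSubmodule]
      have jac : ⁅x, ⁅(u : G), (n : G)⁆⁆ = ⁅⁅x, (u : G)⁆, (n : G)⁆ + ⁅(u : G), ⁅x, (n : G)⁆⁆ :=
        leibniz_lie x (u : G) (n : G)
      rw [jac]
      refine (lowerCentralSeries R G G (a + (b + 1) + 1)).add_mem ?_ ?_
      · have h1 : ⁅x, (u : G)⁆ ∈ lowerCentralSeries R G G (a + 1) := by
          have hmm2 : ⁅(u : G), x⁆ ∈ lowerCentralSeries R G G (a + 1) := by
            rw [LieModule.lowerCentralSeries_succ]
            exact LieSubmodule.lie_mem_lie trivial hx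
          have hneg := (lowerCentralSeries R G G (a + 1)).neg_mem hmm2
          rwa [← lie_skew]
        have h1' := LieSubmodule.lie_mem_lie h1 n.2
        have h2 := IH (a + 1) h1'
        have heq : a + 1 + b + 1 = a + (b + 1) + 1 := by omega
        rwa [heq] at h2
      · have h1 : ⁅x, (n : G)⁆ ∈ lowerCentralSeries R G G (a + b + 1) :=
          IH a (LieSubmodule.lie_mem_lie hx n.2)
        have h2 : ⁅(u : G), ⁅x, (n : G)⁆⁆ ∈ lowerCentralSeries R G G (a + b + 1 + 1) := by
          rw [LieModule.lowerCentralSeries_succ]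
          exact LieSubmodule.lie_mem_lie trivial h1
        have heq : a + b + 1 + 1 = a + (b + 1) + 1 := by omega
        rwa [heq] at h2
    have := key hmem
    simpa using this

end LCS

section Core
variable {k A : Type*} [CommRing k] [Ring A] [Algebra k A]

theorem mul_mem_span_aux {a : A} {X T : Set A} (B : A)
    (hA : a ∈ Submodule.span k X) (hX : ∀ x ∈ X, B * x ∈ Submodule.span k T) :
    B * a ∈ Submodule.span k T := by
  have h1 := Submodule.mem_map_of_mem (f := LinearMap.mulLeft k B) hA
  rw [Submodule.map_span] at h1
  refine Submodule.span_le.mpr ?_ h1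
  rintro _ ⟨x, hx, rfl⟩
  simpa using hX x hx

variable {m : ℕ} (D : Fin m → A) (w : Fin m → ℕ) (c : ℕ)

theorem ins (hmono : Monotone w) (hw1 : ∀ i, 1 ≤ w i)
    (hswap : ∀ i j : Fin m, j < i → w i + w j ≤ c →
      ∃ k0 : Fin m, w i + w j ≤ w k0 ∧ D i * D j = D j * D i + D k0)
    (hswap0 : ∀ i j : Fin m, j < i → c < w i + w j → D i * D j = D j * D i) :
    ∀ t : List (Fin m), t.Pairwise (· ≤ ·) → ∀ i : Fin m,
      D i * (t.map D).prod ∈ Submodule.span k {B : A | ∃ s : List (Fin m),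
        s.Pairwise (· ≤ ·) ∧ w i + (t.map w).sum ≤ (s.map w).sum ∧
        (∀ x ∈ s, i ≤ x ∨ ∃ y ∈ t, y ≤ x) ∧ B = (s.map D).prod} := by
  intro t
  induction t with
  | nil =>
    intro _ i
    refine Submodule.subset_span ⟨[i], ?_, ?_, ?_, ?_⟩
    · simp
    · simp
    · intro x hx; simp at hx; subst hx; exact Or.inl le_rfl
    · simp
  | cons j t0 IH =>
    intro hsort i
    have hj := (List.pairwise_cons.mp hsort).1
    have ht0 := (List.pairwise_cons.mp hsort).2
    rcases le_or_gt i j with hij | hji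
    · refine Submodule.subset_span ⟨i :: j :: t0, ?_, le_rfl, ?_, by simp⟩
      · rw [List.pairwise_cons]
        refine ⟨?_, hsort⟩
        intro b hb
        rcases List.mem_cons.mp hb with rfl | hb
        · exact hij
        · exact le_trans hij (hj b hb)
      · intro x hx
        rcases List.mem_cons.mp hx with rfl | hx
        · exact Or.inl le_rfl
        · exact Or.inr ⟨x, hx, le_rfl⟩
    · have heq1 : D i * ((j :: t0).map D).prod = (D i * D j) * (t0.map D).prod := by
        simp [mul_assoc]
      have term1 : D j * (D i * (t0.map D).prod) ∈ Submodule.span k {B : A | ∃ s : List (Fin m),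
          s.Pairwise (· ≤ ·) ∧ w i + ((j :: t0).map w).sum ≤ (s.map w).sum ∧
          (∀ x ∈ s, i ≤ x ∨ ∃ y ∈ j :: t0, y ≤ x) ∧ B = (s.map D).prod} := by
        refine mul_mem_span_aux (k := k) (D j) (IH ht0 i) ?_
        rintro _ ⟨s', hs'sort, hs'wt, hs'bd, rfl⟩
        refine Submodule.subset_span ⟨j :: s', ?_, ?_, ?_, by simp⟩
        · rw [List.pairwise_cons]
          refine ⟨?_, hs'sort⟩
          intro b hb
          rcases hs'bd b hb with h | ⟨y, hy, hyx⟩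
          · exact le_trans (le_of_lt hji) h
          · exact le_trans (hj y hy) hyx
        · simp only [List.map_cons, List.sum_cons] at *
          omega
        · intro x hx
          rcases List.mem_cons.mp hx with rfl | hx
          · exact Or.inr ⟨x, List.mem_cons_self, le_rfl⟩
          · rcases hs'bd x hx with h | ⟨y, hy, hyx⟩
            · exact Or.inl h
            · exact Or.inr ⟨y, List.mem_cons_of_mem _ hy, hyx⟩
      rcases le_or_gt (w i + w j) c with hc | hc
      · obtain ⟨k0, hk0w, hk0⟩ := hswap i j hji hc
        have hik0 : i < k0 := by
          by_contra hcon
          push_neg at hcon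
          have := hmono hcon
          have := hw1 j
          omega
        have term2 : D k0 * (t0.map D).prod ∈ Submodule.span k {B : A | ∃ s : List (Fin m),
            s.Pairwise (· ≤ ·) ∧ w i + ((j :: t0).map w).sum ≤ (s.map w).sum ∧
            (∀ x ∈ s, i ≤ x ∨ ∃ y ∈ j :: t0, y ≤ x) ∧ B = (s.map D).prod} := by
          refine Submodule.span_mono ?_ (IH ht0 k0)
          rintro _ ⟨s', hs'sort, hs'wt, hs'bd, rfl⟩
          refine ⟨s', hs'sort, ?_, ?_, rfl⟩
          · simp only [List.map_cons, List.sum_cons] at *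
            omega
          · intro x hx
            rcases hs'bd x hx with h | ⟨y, hy, hyx⟩
            · exact Or.inl (le_trans (le_of_lt hik0) h)
            · exact Or.inr ⟨y, List.mem_cons_of_mem _ hy, hyx⟩
        have heq2 : D i * ((j :: t0).map D).prod =
            D j * (D i * (t0.map D).prod) + D k0 * (t0.map D).prod := by
          rw [heq1, hk0, add_mul, mul_assoc]
        rw [heq2]
        exact Submodule.add_mem _ term1 term2
      · have heq2 : D i * ((j :: t0).map D).prod = D j * (D i * (t0.map D).prod) := by
          rw [heq1, hswap0 i j hji hc, mul_assoc]
        rw [heq2]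
        exact term1

theorem main_span (hmono : Monotone w) (hw1 : ∀ i, 1 ≤ w i)
    (hswap : ∀ i j : Fin m, j < i → w i + w j ≤ c →
      ∃ k0 : Fin m, w i + w j ≤ w k0 ∧ D i * D j = D j * D i + D k0)
    (hswap0 : ∀ i j : Fin m, j < i → c < w i + w j → D i * D j = D j * D i) :
    ∀ l : List (Fin m), (l.map D).prod ∈ Submodule.span k {B : A | ∃ s : List (Fin m),
      s.Pairwise (· ≤ ·) ∧ (l.map w).sum ≤ (s.map w).sum ∧ B = (s.map D).prod} := by
  intro l
  induction l with
  | nil => exact Submodule.subset_span ⟨[], by simp, le_rfl, by simp⟩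
  | cons i l IH =>
    have h3 : ((i :: l).map D).prod = D i * (l.map D).prod := by simp
    rw [h3]
    refine mul_mem_span_aux (k := k) (D i) IH ?_
    rintro _ ⟨s, hssort, hswt, rfl⟩
    refine Submodule.span_mono ?_ (ins D w c hmono hw1 hswap hswap0 s hssort i)
    rintro _ ⟨s', hs'sort, hs'wt, _, rfl⟩
    refine ⟨s', hs'sort, ?_, rfl⟩
    simp only [List.map_cons, List.sum_cons]
    omega

end Core

section Decomp

theorem sorted_decomp {α : Type*} [DecidableEq α] [LinearOrder α] :
    ∀ s : List α, s.Pairwise (· ≤ ·) → ∀ a : α,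
      ∃ p q : List α, s = p ++ List.replicate (s.count a) a ++ q := by
  intro s
  induction s with
  | nil => intro _ a; exact ⟨[], [], by simp⟩
  | cons b t IH =>
    intro hsort a
    have hb := (List.pairwise_cons.mp hsort).1
    have ht := (List.pairwise_cons.mp hsort).2
    obtain ⟨p, q, hpq⟩ := IH ht a
    by_cases hba : b = a
    · subst hba
      rcases Nat.eq_zero_or_pos (t.count b) with h0 | hpos
      · refine ⟨[], t, ?_⟩
        simp [List.count_cons_self, h0, List.replicate_succ]
      · have hrep : b ∈ List.replicate (t.count b) b :=
          List.mem_replicate.mpr ⟨Nat.pos_iff_ne_zero.mp hpos, rfl⟩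
        rcases p with _ | ⟨x, p'⟩
        · refine ⟨[], q, ?_⟩
          simp only [List.nil_append] at hpq ⊢
          rw [List.count_cons_self, List.replicate_succ]
          rw [List.cons_append]
          rw [← hpq]
        · exfalso
          have hpq' : t = x :: (p' ++ List.replicate (t.count b) b ++ q) := by
            conv_lhs => rw [hpq]
            simp
          have htailmem : b ∈ p' ++ List.replicate (t.count b) b ++ q :=
            List.mem_append.mpr (Or.inl (List.mem_append.mpr (Or.inr hrep)))
          have hxb : x ≤ b := by
            have hs := (List.pairwise_cons.mp (hpq' ▸ ht)).1
            exact hs b htailmem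
          have hbx : b ≤ x := hb x (by rw [hpq']; exact List.mem_cons_self)
          have hxb' : x = b := le_antisymm hxb hbx
          subst hxb'
          have hcnt2 : (x :: (p' ++ List.replicate (t.count x) x ++ q)).count x
              = p'.count x + t.count x + q.count x + 1 := by
            simp [List.count_cons_self, List.count_append, List.count_replicate_self]
            omega
          have h3 := congrArg (fun l => List.count x l) hpq'
          omega
    · refine ⟨b :: p, q, ?_⟩
      have hcc : (b :: t).count a = t.count a :=
        List.count_cons_of_ne (fun hh => hba hh)
      rw [hcc]
      conv_lhs => rw [hpq]
      simp

theorem length_eq_sum_count {m : ℕ} (s : List (Fin m)) :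
    s.length = ∑ i : Fin m, s.count i := by
  induction s with
  | nil => simp
  | cons a t IH =>
    simp only [List.length_cons, List.count_cons, IH]
    rw [Finset.sum_add_distrib]
    simp [Finset.sum_ite_eq']

theorem exists_big_count {m N : ℕ} (s : List (Fin m)) (hlen : m * N + 1 ≤ s.length) :
    ∃ i : Fin m, N + 1 ≤ s.count i := by
  by_contra hcon
  push_neg at hcon
  have hl := length_eq_sum_count s
  have hle : ∑ i : Fin m, s.count i ≤ ∑ _i : Fin m, N :=
    Finset.sum_le_sum fun i _ => by have := hcon i; omega
  simp only [Finset.sum_const, Finset.card_univ, Fintype.card_fin, smul_eq_mul] at hle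
  omega

theorem prod_eq_zero_of_sorted {A : Type*} [Ring A] {m N : ℕ} (D : Fin m → A)
    (hN : ∀ i, D i ^ N = 0) (s : List (Fin m)) (hs : s.Pairwise (· ≤ ·))
    (hlen : m * N + 1 ≤ s.length) : (s.map D).prod = 0 := by
  obtain ⟨i, hi⟩ := exists_big_count s hlen
  obtain ⟨p, q, hpq⟩ := sorted_decomp s hs i
  obtain ⟨n, hn⟩ : ∃ n, s.count i = n := ⟨_, rfl⟩
  rw [hn] at hpq hi
  rw [hpq]
  simp only [List.map_append, List.prod_append, List.map_replicate, List.prod_replicate]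
  have hz : D i ^ n = 0 := by
    have heq : n = N + (n - N) := by omega
    rw [heq, pow_add, hN, zero_mul]
  rw [hz, mul_zero, zero_mul]

end Decomp

/-- **Lemma.** Let `L` be a Lie algebra over a field and `H` a subalgebra generated by
`h_1, …, h_r` such that every commutator in the `h_i` is ad-nilpotent in `L`.  If `H` is
nilpotent, then there is `v > 0` with `[L, H, …, H] = 0` (`H` repeated `v` times): every
left-normed bracket `[x, k_1, …, k_v]` with `x ∈ L`, `k_i ∈ H` vanishes. -/
theorem stmt_14 (k L : Type*) [Field k] [LieRing L] [LieAlgebra k L]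
    (r : ℕ) (h : Fin r → L) (H : LieSubalgebra k L)
    (hH : H = LieSubalgebra.lieSpan k L (Set.range h))
    (had : ∀ x : L, IsCommutatorIn (Set.range h) x → IsAdNilpotentElt x)
    (hnilp : LieRing.IsNilpotent ↥H) :
    ∃ v : ℕ, 0 < v ∧ ∀ (x : L) (c : Fin v → L), (∀ i, c i ∈ H) →
      (List.ofFn c).foldl (fun y z : L => ⁅y, z⁆) x = 0 := by
  classical
  set S : Set L := Set.range h with hS
  obtain ⟨nc, hnc⟩ := (LieModule.isNilpotent_iff k H H).mp hnilp
  set c : ℕ := nc + 1 with hcdef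
  have hc1 : 1 ≤ c := by omega
  -- commutators of weight w sit in the (w-1)-st term of the lower central series of H
  have hmemH : ∀ (w0 : ℕ) (x : L), CommW S w0 x →
      ∃ y : H, (y : L) = x ∧ y ∈ LieModule.lowerCentralSeries k H H (w0 - 1) := by
    intro w0 x hx
    induction hx with
    | base hxS =>
      refine ⟨⟨_, ?_⟩, rfl, ?_⟩
      · rw [hH]; exact LieSubalgebra.subset_lieSpan hxS
      · simp
    | @bracket a b x y hxa hyb iha ihb =>
      obtain ⟨ya, hya, hmema⟩ := iha
      obtain ⟨yb, hyb2, hmemb⟩ := ihb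
      refine ⟨⁅ya, yb⁆, ?_, ?_⟩
      · rw [LieSubalgebra.coe_bracket, hya, hyb2]
      · have h1 := lcs_bracket_le k H (b - 1) (a - 1) (LieSubmodule.lie_mem_lie hmema hmemb)
        have ha1 := commW_one_le hxa
        have hb1 := commW_one_le hyb
        have heq : (a - 1) + (b - 1) + 1 = a + b - 1 := by omega
        rwa [heq] at h1
  have Hc : ∀ (w0 : ℕ) (x : L), CommW S w0 x → c < w0 → x = 0 := by
    intro w0 x hx hlt
    obtain ⟨y, hy, hmem⟩ := hmemH w0 x hx
    have hle : LieModule.lowerCentralSeries k H H (w0 - 1) ≤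
        LieModule.lowerCentralSeries k H H nc :=
      LieModule.antitone_lowerCentralSeries k H H (by omega)
    rw [hnc] at hle
    have hy0 := hle hmem
    rw [LieSubmodule.mem_bot] at hy0
    rw [← hy, hy0]
    rfl
  -- the finite set U of commutators of weight at most c
  set U : Set L := {x | ∃ w0, w0 ≤ c ∧ CommW S w0 x} with hUdef
  have hUfin : U.Finite := by
    have hsub : U ⊆ ⋃ w0 ∈ Finset.range (c + 1), {x | CommW S w0 x} := by
      rintro x ⟨w0, hw0, hx⟩
      exact Set.mem_biUnion (Finset.mem_range.mpr (by omega)) hx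
    exact Set.Finite.subset (Set.Finite.biUnion (Finset.finite_toSet _)
      fun w0 _ => commW_finite (Set.finite_range h) w0) hsub
  -- enumeration of U
  set lst := hUfin.toFinset.toList with hlst
  set m := lst.length with hm
  set u₀ : Fin m → L := fun i => lst.get i with hu₀
  have hu₀U : ∀ i, u₀ i ∈ U := by
    intro i
    have h1 : lst.get i ∈ lst := lst.get_mem _
    have h2 := Finset.mem_toList.mp h1
    exact hUfin.mem_toFinset.mp h2
  have hUu₀ : ∀ x ∈ U, ∃ i, u₀ i = x := by
    intro x hx
    have h1 : x ∈ lst := Finset.mem_toList.mpr (hUfin.mem_toFinset.mpr hx)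
    obtain ⟨i, hi⟩ := List.mem_iff_get.mp h1
    exact ⟨i, hi⟩
  set w₀ : Fin m → ℕ := fun i => Nat.findGreatest (fun w0 => CommW S w0 (u₀ i)) c with hw₀def
  have hw₀spec : ∀ i, CommW S (w₀ i) (u₀ i) := by
    intro i
    obtain ⟨w0, hw0c, hcomm⟩ := hu₀U i
    exact Nat.findGreatest_spec (P := fun w0 => CommW S w0 (u₀ i)) hw0c hcomm
  have hw₀le : ∀ i, w₀ i ≤ c := fun i => Nat.findGreatest_le (P := fun w0 => CommW S w0 (u₀ i)) c
  have hw₀max : ∀ i w0, w0 ≤ c → CommW S w0 (u₀ i) → w0 ≤ w₀ i := fun i w0 hb hp =>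
    Nat.le_findGreatest (P := fun w0 => CommW S w0 (u₀ i)) hb hp
  have hw₀1 : ∀ i, 1 ≤ w₀ i := by
    intro i
    obtain ⟨w0, hw0c, hcomm⟩ := hu₀U i
    exact le_trans (commW_one_le hcomm) (hw₀max i w0 hw0c hcomm)
  -- sort by weight
  set σ := Tuple.sort w₀ with hσ
  set u : Fin m → L := u₀ ∘ σ with hu
  set ww : Fin m → ℕ := w₀ ∘ σ with hww
  have hmono : Monotone ww := Tuple.monotone_sort w₀
  have hwspec : ∀ i, CommW S (ww i) (u i) := fun i => hw₀spec (σ i)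
  have hwle : ∀ i, ww i ≤ c := fun i => hw₀le (σ i)
  have hw1 : ∀ i, 1 ≤ ww i := fun i => hw₀1 (σ i)
  have hwmax : ∀ i w0, w0 ≤ c → CommW S w0 (u i) → w0 ≤ ww i := fun i => hw₀max (σ i)
  have hUu : ∀ x ∈ U, ∃ i, u i = x := by
    intro x hx
    obtain ⟨i, hi⟩ := hUu₀ x hx
    refine ⟨σ.symm i, ?_⟩
    simp only [hu, Function.comp_apply, Equiv.apply_symm_apply]
    exact hi
  -- the operator a ↦ (y ↦ ⁅y, a⁆)
  letI : LieRing (Module.End k L) := LieRing.ofAssociativeRing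
  set Dl : L →ₗ[k] Module.End k L := -(LieAlgebra.ad k L).toLinearMap with hDl
  have hDapp : ∀ (a y : L), Dl a y = ⁅y, a⁆ := by
    intro a y
    simp only [hDl, LinearMap.neg_apply, LieHom.coe_toLinearMap, LieAlgebra.ad_apply]
    exact lie_skew y a
  have hDid : ∀ a b : L, Dl a * Dl b = Dl b * Dl a + Dl ⁅b, a⁆ := by
    intro a b
    ext y
    simp only [Module.End.mul_apply, LinearMap.add_apply, hDapp]
    rw [leibniz_lie y b a]
    rw [← lie_skew b ⁅y, a⁆]
    abel
  set Du : Fin m → Module.End k L := fun i => Dl (u i) with hDu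
  -- uniform nilpotency exponent
  have hadn : ∀ i, ∃ n : ℕ, 0 < n ∧ Du i ^ n = 0 := by
    intro i
    obtain ⟨n, hn0, hniter⟩ := had (u i) (commW_isCommutatorIn (hwspec i))
    refine ⟨n, hn0, ?_⟩
    ext x
    rw [Module.End.pow_apply]
    have hfun : ⇑(Du i) = fun y => ⁅y, u i⁆ := funext (hDapp (u i))
    rw [hfun]
    exact hniter x
  choose nn hnn0 hnnz using hadn
  set N := (Finset.univ.sup nn) + 1 with hNdef
  have hNz : ∀ i, Du i ^ N = 0 := by
    intro i
    have hle : nn i ≤ N := le_trans (Finset.le_sup (Finset.mem_univ i)) (by omega)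
    have heq : N = nn i + (N - nn i) := by omega
    rw [heq, pow_add, hnnz i, zero_mul]
  -- swap relations
  have hswap : ∀ i j : Fin m, j < i → ww i + ww j ≤ c →
      ∃ k0, ww i + ww j ≤ ww k0 ∧ Du i * Du j = Du j * Du i + Du k0 := by
    intro i j hji hle
    have hz : CommW S (ww j + ww i) ⁅u j, u i⁆ := CommW.bracket (hwspec j) (hwspec i)
    have hzU : ⁅u j, u i⁆ ∈ U := ⟨ww j + ww i, by omega, hz⟩
    obtain ⟨k0, hk0⟩ := hUu _ hzU
    refine ⟨k0, ?_, ?_⟩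
    · have := hwmax k0 (ww j + ww i) (by omega) (hk0 ▸ hz)
      omega
    · simp only [hDu]
      rw [hDid (u i) (u j), ← hk0]
  have hswap0 : ∀ i j : Fin m, j < i → c < ww i + ww j → Du i * Du j = Du j * Du i := by
    intro i j hji hlt
    have hz : CommW S (ww j + ww i) ⁅u j, u i⁆ := CommW.bracket (hwspec j) (hwspec i)
    have hz0 : ⁅u j, u i⁆ = 0 := Hc _ _ hz (by omega)
    simp only [hDu]
    rw [hDid (u i) (u j), hz0, map_zero, add_zero]
  -- the span of the enumeration contains H
  set P : Submodule k L := Submodule.span k (Set.range u) with hP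
  have hbase : ∀ i j, ⁅u i, u j⁆ ∈ P := by
    intro i j
    have hz : CommW S (ww i + ww j) ⁅u i, u j⁆ := CommW.bracket (hwspec i) (hwspec j)
    rcases le_or_gt (ww i + ww j) c with hle | hlt
    · obtain ⟨k0, hk0⟩ := hUu _ ⟨_, hle, hz⟩
      exact Submodule.subset_span ⟨k0, hk0⟩
    · rw [Hc _ _ hz hlt]
      exact P.zero_mem
  have hstep1 : ∀ j, ∀ x ∈ P, ⁅x, u j⁆ ∈ P := by
    intro j x hx
    have hle : P ≤ Submodule.comap (Dl (u j)) P := by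
      rw [hP, Submodule.span_le]
      rintro _ ⟨i, rfl⟩
      simp only [SetLike.mem_coe, Submodule.mem_comap]
      rw [hDapp]
      exact hbase i j
    have h2 := hle hx
    rw [Submodule.mem_comap, hDapp] at h2
    exact h2
  have hclosed : ∀ x ∈ P, ∀ y ∈ P, ⁅x, y⁆ ∈ P := by
    intro x hx y hy
    have hle : P ≤ Submodule.comap (LieAlgebra.ad k L x) P := by
      conv_lhs => rw [hP]
      rw [Submodule.span_le]
      rintro _ ⟨j, rfl⟩
      simp only [SetLike.mem_coe, Submodule.mem_comap, LieAlgebra.ad_apply]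
      exact hstep1 j x hx
    have h2 := hle hy
    rw [Submodule.mem_comap] at h2
    simpa [LieAlgebra.ad_apply] using h2
  have hHP : ∀ x ∈ H, x ∈ P := by
    set HA : LieSubalgebra k L :=
      { toSubmodule := P, lie_mem' := fun {a b} ha hb => hclosed a ha b hb } with hHA
    have hSsub : S ⊆ HA := by
      intro x hxS
      have hx1 : CommW S 1 x := CommW.base hxS
      have hxU : x ∈ U := ⟨1, hc1, hx1⟩
      obtain ⟨i, hi⟩ := hUu x hxU
      exact Submodule.subset_span ⟨i, hi⟩
    have hHle : H ≤ HA := by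
      rw [hH]
      exact (LieSubalgebra.lieSpan_le).mpr hSsub
    exact fun x hx => hHle hx
  -- folds as operator products
  have hfold : ∀ (lst0 : List L) (x : L),
      lst0.foldl (fun y z => ⁅y, z⁆) x = ((lst0.reverse.map Dl).prod) x := by
    intro lst0
    induction lst0 with
    | nil => intro x; simp
    | cons a t IH =>
      intro x
      rw [List.foldl_cons, IH]
      simp only [List.reverse_cons, List.map_append, List.prod_append, List.map_cons,
        List.map_nil, List.prod_cons, List.prod_nil, mul_one, Module.End.mul_apply]
      rw [hDapp]
  -- multilinear expansion
  have hexp : ∀ lst0 : List L, (∀ a ∈ lst0, a ∈ P) →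
      (lst0.map Dl).prod ∈ Submodule.span k {B : Module.End k L |
        ∃ li : List (Fin m), li.length = lst0.length ∧ B = (li.map Du).prod} := by
    intro lst0
    induction lst0 with
    | nil =>
      intro _
      exact Submodule.subset_span ⟨[], rfl, by simp⟩
    | cons a t IH =>
      intro hmem
      have h1 : Dl a ∈ Submodule.span k (Set.range Du) := by
        have h0 : Dl a ∈ Submodule.map Dl P :=
          Submodule.mem_map_of_mem (hmem a (List.mem_cons_self))
        rw [hP, Submodule.map_span, ← Set.range_comp] at h0
        exact h0
      have h2 := IH fun a ha => hmem a (List.mem_cons_of_mem _ ha)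
      have h3 : ((a :: t).map Dl).prod = Dl a * (t.map Dl).prod := by simp
      rw [h3]
      have h4 := Submodule.mul_mem_mul h1 h2
      rw [Submodule.span_mul_span] at h4
      refine Submodule.span_le.mpr ?_ h4
      rintro _ ⟨B1, hB1, B2, hB2, rfl⟩
      obtain ⟨i, rfl⟩ := hB1
      obtain ⟨li, hlen, rfl⟩ := hB2
      refine Submodule.subset_span ⟨i :: li, by simp [hlen], by simp⟩
  -- helper to collapse spans of zero sets
  have span_zero : ∀ {X : Set (Module.End k L)} {B : Module.End k L},
      B ∈ Submodule.span k X → (∀ y ∈ X, y = 0) → B = 0 := by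
    intro X B hB hX
    have hle : Submodule.span k X ≤ ⊥ :=
      Submodule.span_le.mpr fun y hy => by simp [hX y hy]
    simpa using hle hB
  -- conclusion
  refine ⟨c * (m * N + 1), Nat.mul_pos (by omega) (by omega), ?_⟩
  intro x cf hcf
  rw [hfold]
  have hlen0 : (List.ofFn cf).reverse.length = c * (m * N + 1) := by
    rw [List.length_reverse, List.length_ofFn]
  have hmem0 : ∀ a ∈ (List.ofFn cf).reverse, a ∈ P := by
    intro a ha
    rw [List.mem_reverse] at ha
    obtain ⟨i, rfl⟩ := List.mem_ofFn.mp ha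
    exact hHP _ (hcf i)
  have hzero : (((List.ofFn cf).reverse.map Dl).prod) = 0 := by
    refine span_zero (hexp _ hmem0) ?_
    rintro _ ⟨li, hlen, rfl⟩
    rw [hlen0] at hlen
    refine span_zero (main_span Du ww c hmono hw1 hswap hswap0 li) ?_
    rintro _ ⟨s, hssort, hswt, rfl⟩
    have hwtl : c * (m * N + 1) ≤ (li.map ww).sum := by
      have hlb := List.length_le_sum_of_one_le (li.map ww) ?_
      · rw [List.length_map, hlen] at hlb
        exact hlb
      · intro i hi
        obtain ⟨j, _, rfl⟩ := List.mem_map.mp hi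
        exact hw1 j
    have hwts : (s.map ww).sum ≤ s.length * c := by
      have hub := List.sum_le_card_nsmul (s.map ww) c ?_
      · simpa [List.length_map, smul_eq_mul] using hub
      · intro i hi
        obtain ⟨j, _, rfl⟩ := List.mem_map.mp hi
        exact hwle j
    have hslen : m * N + 1 ≤ s.length := by
      have h1 : c * (m * N + 1) ≤ s.length * c := by omega
      rw [mul_comm (s.length) c] at h1
      exact Nat.le_of_mul_le_mul_left h1 (by omega)
    exact prod_eq_zero_of_sorted Du hNz s hssort hslen
  rw [hzero]
  simp
end

section
/- Let p be a prime and K a pro-p group (a profinite group in which every open normal subgroup has index a power of p) such that the derived group K' (the closure of the commutator subgroup of K) is periodic. Then K satisfies a coset identity of the following form: there exist a nonnegative integer j, an open subgroup H of K, and elements x, y ∈ K such that [x h_1, y h_2]^{p^j} = 1 for all h_1, h_2 ∈ H, where [u, v] = u^{-1} v^{-1} u v. -/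
/-- In a pro-`p` group, every element of finite order has `p`-power order. -/
lemma aux_ppow_order (p : ℕ) (hp : p.Prime) (K : Type*)
    [Group K] [TopologicalSpace K] [IsTopologicalGroup K]
    [CompactSpace K] [T2Space K] [TotallyDisconnectedSpace K]
    (hpro_p : ∀ N : Subgroup K, N.Normal → IsOpen (N : Set K) →
      ∃ n : ℕ, N.index = p ^ n)
    (c : K) (hc : IsOfFinOrder c) : ∃ j : ℕ, c ^ p ^ j = 1 := by
  -- first: any element of prime order q has q = p
  have key : ∀ (q : ℕ), q.Prime → ∀ f : K, orderOf f = q → q = p := by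
    intro q hq f hf
    have hf1 : f ≠ 1 := by
      intro h; rw [h, orderOf_one] at hf; exact hq.one_lt.ne' hf.symm
    obtain ⟨W, hW, h1W, hfW⟩ := exists_isClopen_of_totally_separated (Ne.symm hf1)
    obtain ⟨H, hH⟩ :=
      IsTopologicalGroup.exist_openNormalSubgroup_sub_clopen_nhds_of_one hW h1W
    have hfH : f ∉ H.toSubgroup := fun h => hfW (hH h)
    obtain ⟨n, hn⟩ := hpro_p H.toSubgroup H.isNormal' H.isOpen'
    -- quotient is finite
    have hfin : Finite (K ⧸ H.toSubgroup) := by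
      apply Nat.finite_of_card_ne_zero
      rw [show Nat.card (K ⧸ H.toSubgroup) = H.toSubgroup.index from rfl, hn]
      exact (Nat.pow_pos hp.pos).ne'
    set e : K ⧸ H.toSubgroup := QuotientGroup.mk f with he
    have he1 : e ≠ 1 := by
      simpa [he, QuotientGroup.eq_one_iff] using hfH
    have heq : e ^ q = 1 := by
      rw [he, ← QuotientGroup.mk_pow, ← hf, pow_orderOf_eq_one, QuotientGroup.mk_one]
    haveI : Fact q.Prime := ⟨hq⟩
    have horder : orderOf e = q := orderOf_eq_prime heq he1
    have hdvd : q ∣ p ^ n := by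
      rw [← horder, ← hn]; exact orderOf_dvd_natCard e
    exact (Nat.prime_dvd_prime_iff_eq hq hp).mp (hq.dvd_of_dvd_pow hdvd)
  -- now: orderOf c is a power of p
  set n := orderOf c with hn
  have hn0 : n ≠ 0 := hc.orderOf_pos.ne'
  set j := n.factorization p with hj
  refine ⟨j, ?_⟩
  set m := n / p ^ j with hm
  have hdvd : p ^ j ∣ n := Nat.ordProj_dvd n p
  have hord : orderOf (c ^ p ^ j) = m := by
    rw [orderOf_pow' c (pow_ne_zero j hp.pos.ne'), ← hn, Nat.gcd_eq_right hdvd, ← hm]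
  -- m = 1
  have hm1 : m = 1 := by
    by_contra hne
    have hm0 : m ≠ 0 := by
      rw [hm]; exact Nat.ordCompl_pos p hn0 |>.ne'
    set q := m.minFac with hq
    have hqprime : q.Prime := Nat.minFac_prime hne
    have hqd : q ∣ m := Nat.minFac_dvd m
    -- element of order q
    set f := (c ^ p ^ j) ^ (m / q) with hf
    have hfo : orderOf f = q := by
      rw [hf, orderOf_pow' _ (Nat.div_ne_zero_iff_of_dvd hqd |>.mpr ⟨hm0, hqprime.pos.ne'⟩), hord, Nat.gcd_eq_right (Nat.div_dvd_of_dvd hqd),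
        Nat.div_div_self hqd hm0]
    have : q = p := key q hqprime f hfo
    have : p ∣ m := this ▸ hqd
    exact Nat.not_dvd_ordCompl hp hn0 this
  rw [← hord] at hm1
  exact orderOf_eq_one_iff.mp hm1

/-- **Lemma.** Let `p` be a prime and `K` a pro-`p` group whose derived group (the
closure of the commutator subgroup) is periodic.  Then `K` satisfies a coset identity:
there are `j : ℕ`, an open subgroup `H ≤ K` and `x y : K` such that
`[x h₁, y h₂] ^ (p ^ j) = 1` for all `h₁ h₂ ∈ H`. -/
theorem stmt_15 (p : ℕ) (hp : p.Prime) (K : Type*)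
    [Group K] [TopologicalSpace K] [IsTopologicalGroup K]
    [CompactSpace K] [T2Space K] [TotallyDisconnectedSpace K]
    (hpro_p : ∀ N : Subgroup K, N.Normal → IsOpen (N : Set K) →
      ∃ n : ℕ, N.index = p ^ n)
    (hper : ∀ g ∈ (commutator K).topologicalClosure, IsOfFinOrder g) :
    ∃ (j : ℕ) (H : Subgroup K) (x y : K), IsOpen (H : Set K) ∧
      ∀ h₁ ∈ H, ∀ h₂ ∈ H,
        ((x * h₁)⁻¹ * (y * h₂)⁻¹ * (x * h₁) * (y * h₂)) ^ (p ^ j) = 1 := by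
  classical
  set F : ℕ → Set (K × K) := fun j =>
    {z | (z.1⁻¹ * z.2⁻¹ * z.1 * z.2) ^ p ^ j = 1} with hF
  have hclosed : ∀ j, IsClosed (F j) := by
    intro j
    have hcont : Continuous fun z : K × K => (z.1⁻¹ * z.2⁻¹ * z.1 * z.2) ^ p ^ j := by
      fun_prop
    exact isClosed_singleton.preimage hcont
  have hcover : ⋃ j, F j = Set.univ := by
    ext z; simp only [Set.mem_iUnion, Set.mem_univ, iff_true]
    have hmem : z.1⁻¹ * z.2⁻¹ * z.1 * z.2 ∈ commutator K := by
      have := Subgroup.commutator_mem_commutator (Subgroup.mem_top z.1⁻¹)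
        (Subgroup.mem_top z.2⁻¹)
      rw [commutator_def]
      simpa [commutatorElement_def, mul_assoc] using this
    exact aux_ppow_order p hp K hpro_p _
      (hper _ ((commutator K).le_topologicalClosure hmem))
  obtain ⟨j, z, hz⟩ := nonempty_interior_of_iUnion_of_closed hclosed hcover
  obtain ⟨U, V, hU, hV, hxU, hyV, hUV⟩ := isOpen_prod_iff.mp isOpen_interior z.1 z.2 hz
  set W : Set K := ((z.1 * ·) ⁻¹' U) ∩ ((z.2 * ·) ⁻¹' V) with hWdef
  have hWopen : IsOpen W :=
    ((hU.preimage (continuous_mul_left z.1)).inter (hV.preimage (continuous_mul_left z.2)))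
  have h1W : (1 : K) ∈ W := by simp [hWdef, hxU, hyV]
  obtain ⟨Z, hZ, h1Z, hZW⟩ := compact_exists_isClopen_in_isOpen hWopen h1W
  obtain ⟨H, hH⟩ := IsTopologicalGroup.exist_openSubgroup_sub_clopen_nhds_of_one hZ h1Z
  refine ⟨j, H.toSubgroup, z.1, z.2, H.isOpen, ?_⟩
  intro h₁ hh₁ h₂ hh₂
  have hmem : (z.1 * h₁, z.2 * h₂) ∈ interior (F j) :=
    hUV ⟨(hZW (hH hh₁)).1, (hZW (hH hh₂)).2⟩
  simpa [hF] using interior_subset hmem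
end
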